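/- Let $k$ be a field and $R$ a nonzero finitely generated commutative $k$-algebra. If there exists an injective $k$-algebra homomorphism $R \otimes_k R \to R$, then the structure map $k \to R$ is an isomorphism, i.e. $R = k$. -/

import Mathlib

open TensorProduct Pointwise

private lemma sq_le_four_pow : ∀ K : ℕ, (K + 1) ^ 2 ≤ 4 ^ K := by
  intro K
  induction K with
  | zero => norm_num
  | succ n ih =>
    have h4 : (4:ℕ) ^ (n+1) = 4 * 4 ^ n := by ring
    rw [h4]
    calc (n + 1 + 1) ^ 2 ≤ (2 * (n + 1)) ^ 2 := Nat.pow_le_pow_left (by omega) 2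
      _ = 4 * (n + 1) ^ 2 := by ring
      _ ≤ 4 * 4 ^ n := Nat.mul_le_mul_left 4 ih

open TensorProduct in
/-- If a nonzero finitely generated commutative `k`-algebra `R` admits an injective
`k`-algebra homomorphism `R ⊗_k R → R`, then `R = k`. -/
theorem stmt3 {k R : Type*} [Field k] [CommRing R] [Nontrivial R] [Algebra k R]
    [Algebra.FiniteType k R]
    (f : (R ⊗[k] R) →ₐ[k] R) (hf : Function.Injective f) :
    Function.Bijective (algebraMap k R) := by
  classical
  constructor
  · exact (algebraMap k R).injective
  by_contra hsurj
  obtain ⟨x, hxr⟩ : ∃ x : R, x ∉ Set.range (algebraMap k R) := by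
    by_contra h
    push_neg at h
    exact hsurj fun y => h y
  have hx : ∀ a : k, algebraMap k R a ≠ x := fun a ha => hxr ⟨a, ha⟩
  -- a finite generating set containing x
  obtain ⟨v₀, hv₀⟩ := (inferInstance : Algebra.FiniteType k R).out
  set v : Finset R := insert x v₀ with hvdef
  have hv : Algebra.adjoin k (v : Set R) = ⊤ := by
    rw [eq_top_iff, ← hv₀]
    exact Algebra.adjoin_mono (by simp [hvdef, Finset.coe_insert, Set.subset_insert])
  have hxv : x ∈ v := Finset.mem_insert_self x v₀
  set u : Set R := insert 1 (v : Set R) with hudef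
  set P : Submodule k R := Submodule.span k u with hPdef
  have h1P : (1 : R) ∈ P := Submodule.subset_span (Set.mem_insert 1 _)
  have hvP : ∀ y ∈ v, y ∈ P := fun y hy =>
    Submodule.subset_span (Set.mem_insert_of_mem _ hy)
  set N : ℕ := v.card with hNdef
  -- monotonicity of powers of P
  have onele : ∀ c : ℕ, (1 : Submodule k R) ≤ P ^ c := by
    intro c
    induction c with
    | zero => rw [pow_zero]
    | succ n ih =>
      have : (1 : Submodule k R) = 1 * 1 := (one_mul 1).symm
      rw [this, pow_succ]
      exact mul_le_mul' ih (by rwa [Submodule.one_le])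
  have mono : ∀ {a b : ℕ}, a ≤ b → P ^ a ≤ P ^ b := by
    intro a b hab
    have : P ^ a * 1 ≤ P ^ a * P ^ (b - a) :=
      mul_le_mul' le_rfl (onele _)
    rw [mul_one, ← pow_add] at this
    rwa [Nat.add_sub_cancel' hab] at this
  -- every element lies in some power of P
  have exP : ∀ r : R, ∃ D, r ∈ P ^ D := by
    intro r
    let S : Subalgebra k R :=
      { carrier := {r | ∃ D, r ∈ P ^ D}
        mul_mem' := by
          rintro a b ⟨Da, ha⟩ ⟨Db, hb⟩
          exact ⟨Da + Db, by rw [pow_add]; exact Submodule.mul_mem_mul ha hb⟩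
        add_mem' := by
          rintro a b ⟨Da, ha⟩ ⟨Db, hb⟩
          exact ⟨max Da Db, Submodule.add_mem _ (mono (le_max_left _ _) ha)
            (mono (le_max_right _ _) hb)⟩
        algebraMap_mem' := by
          intro c
          refine ⟨0, ?_⟩
          rw [pow_zero, Submodule.one_eq_span, Algebra.algebraMap_eq_smul_one]
          exact Submodule.smul_mem _ c (Submodule.subset_span rfl) }
    have : Algebra.adjoin k (v : Set R) ≤ S := by
      rw [Algebra.adjoin_le_iff]
      intro y hy
      exact ⟨1, by rw [pow_one]; exact hvP y hy⟩
    rw [hv] at this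
    exact this Algebra.mem_top
  -- the two injections R → R
  set gL : R →ₐ[k] R := f.comp Algebra.TensorProduct.includeLeft with hgL
  set gR : R →ₐ[k] R := f.comp (Algebra.TensorProduct.includeRight) with hgR
  have hmul : ∀ a b : R, f (a ⊗ₜ[k] b) = gL a * gR b := by
    intro a b
    have : (a ⊗ₜ[k] (1:R)) * ((1:R) ⊗ₜ[k] b) = a ⊗ₜ[k] b := by
      rw [Algebra.TensorProduct.tmul_mul_tmul, mul_one, one_mul]
    rw [← this, map_mul]
    rfl
  -- choose a uniform exponent e
  have hchoose : ∀ a : R, ∃ n, gL a ∈ P ^ n ∧ gR a ∈ P ^ n := by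
    intro a
    obtain ⟨n1, h1⟩ := exP (gL a)
    obtain ⟨n2, h2⟩ := exP (gR a)
    exact ⟨max n1 n2, mono (le_max_left _ _) h1, mono (le_max_right _ _) h2⟩
  choose DD hDD using hchoose
  set uF : Finset R := insert 1 v with huF
  set e : ℕ := 1 + uF.sup DD with hedef
  have he1 : 1 ≤ e := Nat.le_add_right 1 _
  have heu : ∀ a ∈ u, gL a ∈ P ^ e ∧ gR a ∈ P ^ e := by
    intro a ha
    have haF : a ∈ uF := by
      rcases Set.mem_insert_iff.mp ha with h | h
      · rw [h]; exact Finset.mem_insert_self 1 v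
      · exact Finset.mem_insert_of_mem h
    have : DD a ≤ e := le_trans (Finset.le_sup haF) (Nat.le_add_left _ _)
    exact ⟨mono this (hDD a).1, mono this (hDD a).2⟩
  -- powers bound for gL, gR
  have powbound : ∀ (g : R →ₐ[k] R), (∀ a ∈ u, g a ∈ P ^ e) →
      ∀ D : ℕ, ∀ r ∈ P ^ D, g r ∈ P ^ (e * D) := by
    intro g hg D
    induction D with
    | zero =>
      intro r hr
      rw [pow_zero, Submodule.one_eq_span] at hr
      obtain ⟨c, rfl⟩ := Submodule.mem_span_singleton.mp hr
      rw [map_smul, map_one, Nat.mul_zero, pow_zero, Submodule.one_eq_span]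
      exact Submodule.smul_mem _ c (Submodule.subset_span rfl)
    | succ n ih =>
      intro r hr
      rw [pow_succ] at hr
      refine Submodule.mul_induction_on hr ?_ ?_
      · intro m hm p hp
        rw [map_mul]
        have hgp : g p ∈ P ^ e := by
          refine Submodule.span_induction ?_ ?_ ?_ ?_ hp
          · exact fun y hy => hg y hy
          · rw [map_zero]; exact Submodule.zero_mem _
          · intro a b _ _ ha hb; rw [map_add]; exact Submodule.add_mem _ ha hb
          · intro c a _ ha; rw [map_smul]; exact Submodule.smul_mem _ c ha
        have := Submodule.mul_mem_mul (ih m hm) hgp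
        rw [← pow_add] at this
        have heq : e * n + e = e * (n + 1) := by ring
        rwa [heq] at this
      · intro a b ha hb
        rw [map_add]; exact Submodule.add_mem _ ha hb
  have hgLbound := powbound gL (fun a ha => (heu a ha).1)
  have hgRbound := powbound gR (fun a ha => (heu a ha).2)
  -- counting: elements of u ^ D are monomials in v with exponents ≤ D
  have monom : ∀ D : ℕ, ∀ r ∈ (u ^ D : Set R), ∃ g : {y // y ∈ v} → ℕ,
      (∀ i, g i ≤ D) ∧ r = ∏ i : {y // y ∈ v}, (i : R) ^ (g i) := by
    intro D
    induction D with
    | zero =>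
      intro r hr
      rw [pow_zero] at hr
      refine ⟨fun _ => 0, fun _ => le_refl 0, ?_⟩
      rw [Set.mem_one] at hr
      simp [hr]
    | succ n ih =>
      intro r hr
      rw [pow_succ'] at hr
      obtain ⟨a, ha, b, hb, rfl⟩ := Set.mem_mul.mp hr
      obtain ⟨g, hgle, rfl⟩ := ih b hb
      rcases ha with h1 | hav
      · exact ⟨g, fun i => (hgle i).trans (Nat.le_succ n), by rw [h1, one_mul]⟩
      · set i₀ : {y // y ∈ v} := ⟨a, hav⟩ with hi₀
        refine ⟨Function.update g i₀ (g i₀ + 1), ?_, ?_⟩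
        · intro i
          by_cases hi : i = i₀
          · rw [hi, Function.update_self]; exact Nat.succ_le_succ (hgle i₀)
          · rw [Function.update_of_ne hi]; exact (hgle i).trans (Nat.le_succ n)
        · have hia : (i₀ : R) = a := rfl
          symm
          calc ∏ i : {y // y ∈ v}, (i : R) ^ (Function.update g i₀ (g i₀ + 1) i)
              = (i₀ : R) ^ (g i₀ + 1) * ∏ i ∈ Finset.univ.erase i₀, (i : R) ^ g i := by
                rw [← Finset.mul_prod_erase Finset.univ _ (Finset.mem_univ i₀),
                  Function.update_self]
                congr 1
                exact Finset.prod_congr rfl fun i hi => by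
                  rw [Function.update_of_ne (Finset.ne_of_mem_erase hi)]
            _ = a * ((i₀ : R) ^ (g i₀) * ∏ i ∈ Finset.univ.erase i₀, (i : R) ^ g i) := by
                rw [pow_succ', hia]; ring
            _ = a * ∏ i : {y // y ∈ v}, (i : R) ^ g i := by
                rw [Finset.mul_prod_erase Finset.univ
                  (fun i : {y // y ∈ v} => (i : R) ^ g i) (Finset.mem_univ i₀)]
  -- dimension bound for P ^ D
  have FDbound : ∀ D : ℕ, FiniteDimensional k ↥(P ^ D) ∧
      Module.finrank k ↥(P ^ D) ≤ (D + 1) ^ N := by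
    intro D
    set Φ : ({y // y ∈ v} → Fin (D + 1)) → R :=
      fun g => ∏ i : {y // y ∈ v}, (i : R) ^ ((g i : ℕ)) with hΦ
    set t : Finset R := Finset.image Φ Finset.univ with ht
    have hsub : (u ^ D : Set R) ⊆ (t : Set R) := by
      intro r hr
      obtain ⟨g, hgle, rfl⟩ := monom D r hr
      have : Φ (fun i => ⟨g i, Nat.lt_succ_of_le (hgle i)⟩) =
          ∏ i : {y // y ∈ v}, (i : R) ^ (g i) := rfl
      rw [← this]
      exact Finset.mem_coe.mpr (Finset.mem_image_of_mem Φ (Finset.mem_univ _))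
    have hle : P ^ D ≤ Submodule.span k (t : Set R) := by
      rw [hPdef, Submodule.span_pow]
      exact Submodule.span_mono hsub
    haveI : FiniteDimensional k ↥(Submodule.span k (t : Set R)) :=
      FiniteDimensional.span_of_finite k t.finite_toSet
    haveI hFD : FiniteDimensional k ↥(P ^ D) :=
      Submodule.finiteDimensional_of_le hle
    refine ⟨hFD, ?_⟩
    have h1 : Module.finrank k ↥(P ^ D) ≤ Module.finrank k ↥(Submodule.span k (t : Set R)) :=
      LinearMap.finrank_le_finrank_of_injective
        (Submodule.inclusion_injective hle)
    have h2 : Module.finrank k ↥(Submodule.span k (t : Set R)) ≤ t.card :=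
      finrank_span_finset_le_card t
    have h3 : t.card ≤ (D + 1) ^ N := by
      calc t.card ≤ Finset.univ.card := Finset.card_image_le
        _ = Fintype.card ({y // y ∈ v} → Fin (D + 1)) := Finset.card_univ
        _ = (D + 1) ^ N := by
            rw [Fintype.card_fun, Fintype.card_fin, Fintype.card_coe]
    exact h1.trans (h2.trans h3)
  set d : ℕ → ℕ := fun D => Module.finrank k ↥(P ^ D) with hd
  -- the key growth inequality
  have grow : ∀ D : ℕ, d D * d D ≤ d (2 * e * D) := by
    intro D
    haveI := (FDbound D).1
    haveI := (FDbound (2 * e * D)).1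
    set TL : (↥(P ^ D) ⊗[k] ↥(P ^ D)) →ₗ[k] R :=
      f.toLinearMap.comp
        (TensorProduct.map (P ^ D).subtype (P ^ D).subtype) with hTL
    have hmem : ∀ z : ↥(P ^ D) ⊗[k] ↥(P ^ D), TL z ∈ P ^ (2 * e * D) := by
      intro z
      induction z with
      | zero => rw [map_zero]; exact Submodule.zero_mem _
      | tmul a b =>
        have : TL (a ⊗ₜ[k] b) = f ((a : R) ⊗ₜ[k] (b : R)) := rfl
        rw [this, hmul]
        have := Submodule.mul_mem_mul (hgLbound D (a : R) a.2) (hgRbound D (b : R) b.2)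
        rw [← pow_add] at this
        have heq : e * D + e * D = 2 * e * D := by ring
        rwa [heq] at this
      | add a b ha hb => rw [map_add]; exact Submodule.add_mem _ ha hb
    set T : (↥(P ^ D) ⊗[k] ↥(P ^ D)) →ₗ[k] ↥(P ^ (2 * e * D)) :=
      TL.codRestrict _ hmem with hT
    have hmapinj : Function.Injective
        (TensorProduct.map (P ^ D).subtype (P ^ D).subtype) := by
      have heq : TensorProduct.map (P ^ D).subtype (P ^ D).subtype =
          (LinearMap.rTensor R (P ^ D).subtype).comp
            (LinearMap.lTensor ↥(P ^ D) (P ^ D).subtype) := by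
        apply TensorProduct.ext'
        intro a b
        rfl
      rw [heq]
      exact (Module.Flat.rTensor_preserves_injective_linearMap _
          (Submodule.injective_subtype _)).comp
        (Module.Flat.lTensor_preserves_injective_linearMap _
          (Submodule.injective_subtype _))
    have hTinj : Function.Injective T := by
      rw [hT]
      intro z w hzw
      have : TL z = TL w := congrArg Subtype.val hzw
      exact hmapinj (hf (by simpa [hTL] using this))
    have h1 : Module.finrank k (↥(P ^ D) ⊗[k] ↥(P ^ D)) ≤ d (2 * e * D) :=
      LinearMap.finrank_le_finrank_of_injective hTinj
    rwa [Module.finrank_tensorProduct] at h1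
  -- d 1 ≥ 2
  have hd1 : 2 ≤ d 1 := by
    haveI := (FDbound 1).1
    have hxP : x ∈ P ^ 1 := by rw [pow_one]; exact hvP x hxv
    have h1P1 : (1 : R) ∈ P ^ 1 := by rw [pow_one]; exact h1P
    set w : Fin 2 → ↥(P ^ 1) := ![⟨1, h1P1⟩, ⟨x, hxP⟩] with hw
    have hindep : LinearIndependent k w := by
      apply LinearIndependent.of_comp (P ^ 1).subtype
      have : (P ^ 1).subtype ∘ w = ![1, x] := by
        funext i
        fin_cases i <;> rfl
      rw [this]
      refine (LinearIndependent.pair_iff' one_ne_zero).mpr ?_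
      intro a ha
      exact hx a (by rw [Algebra.algebraMap_eq_smul_one]; exact ha)
    have := hindep.fintype_card_le_finrank
    simpa using this
  -- iterate growth
  have iter : ∀ m : ℕ, 2 ^ (2 ^ m) ≤ d ((2 * e) ^ m) := by
    intro m
    induction m with
    | zero => simpa using hd1
    | succ n ih =>
      have h1 : 2 ^ (2 ^ (n + 1)) = (2 ^ (2 ^ n)) * (2 ^ (2 ^ n)) := by
        rw [← pow_add, ← two_mul, ← pow_succ']
      rw [h1]
      calc (2 ^ (2 ^ n)) * (2 ^ (2 ^ n)) ≤ d ((2*e) ^ n) * d ((2*e) ^ n) :=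
            Nat.mul_le_mul ih ih
        _ ≤ d (2 * e * (2*e) ^ n) := grow _
        _ = d ((2*e) ^ (n+1)) := by rw [pow_succ']
  -- final numeric contradiction
  set K : ℕ := (e + 1) * N with hK
  have final : ∀ m : ℕ, 2 ^ m ≤ K * (m + 1) := by
    intro m
    have h1 : 2 ^ (2 ^ m) ≤ ((2*e) ^ m + 1) ^ N := (iter m).trans (FDbound _).2
    have h2e : 2 ≤ 2 * e := by omega
    have hp1 : (2*e) ^ m + 1 ≤ (2*e) ^ (m+1) := by
      have : 1 ≤ (2*e) ^ m := Nat.one_le_pow _ _ (by omega)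
      calc (2*e) ^ m + 1 ≤ (2*e) ^ m + (2*e) ^ m := by omega
        _ = 2 * (2*e) ^ m := by ring
        _ ≤ (2*e) * (2*e) ^ m := Nat.mul_le_mul_right _ h2e
        _ = (2*e) ^ (m+1) := (pow_succ' _ _).symm
    have h2 : ((2*e) ^ m + 1) ^ N ≤ (2*e) ^ ((m+1) * N) := by
      rw [pow_mul]
      exact Nat.pow_le_pow_left hp1 N
    have h3 : (2*e : ℕ) ≤ 2 ^ (e+1) := by
      have : e < 2 ^ e := Nat.lt_two_pow_self
      calc (2*e : ℕ) ≤ 2 * 2 ^ e := by omega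
        _ = 2 ^ (e+1) := (pow_succ' _ _).symm
    have h4 : (2*e) ^ ((m+1) * N) ≤ 2 ^ ((e+1) * ((m+1) * N)) := by
      have := Nat.pow_le_pow_left h3 ((m+1) * N)
      rwa [← pow_mul] at this
    have h5 : 2 ^ (2 ^ m) ≤ 2 ^ (K * (m+1)) := by
      refine h1.trans (h2.trans (h4.trans ?_))
      apply Nat.pow_le_pow_right (by norm_num)
      rw [hK]; ring_nf; omega
    exact (Nat.pow_le_pow_iff_right (by norm_num)).mp h5
  have hcontra := final (2 * K + 2)
  have hpow : 2 ^ (2 * K + 2) = 4 * 4 ^ K := by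
    rw [pow_add, pow_mul]
    norm_num
    ring
  rw [hpow] at hcontra
  have := sq_le_four_pow K
  nlinarith [this, hcontra]
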